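/- Let |f'| be log-preinvex on K with |f'(a)| ≠ |f'(b)| and both positive. Then |(1/η(b,a)) ∫_a^{a+η(b,a)} f(x) dx − f((2a+η(b,a))/2)| ≤ η(b,a)·[ (|f'(b)|^{1/2} − |f'(a)|^{1/2}) / (log|f'(b)| − log|f'(a)|) ]². -/

import Mathlib

open MeasureTheory intervalIntegral

lemma int_exp_aux (c L u v : ℝ) (hL : L ≠ 0) :
    ∫ s in u..v, Real.exp (c + L * s)
      = (Real.exp (c + L * v) - Real.exp (c + L * u)) / L := by
  have hd : ∀ s : ℝ, HasDerivAt (fun s => Real.exp (c + L * s) / L)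
      (Real.exp (c + L * s)) s := by
    intro s
    have h1 : HasDerivAt (fun s : ℝ => c + L * s) L s := by
      simpa using ((hasDerivAt_id s).const_mul L).const_add c
    have := h1.exp.div_const L
    simpa [mul_div_assoc, mul_div_cancel_right₀, hL] using this
  rw [intervalIntegral.integral_eq_sub_of_hasDerivAt (fun s _ => hd s)
      ((Real.continuous_exp.comp (by continuity)).intervalIntegrable u v)]
  ring

theorem hh_left_log_preinvex
    (K : Set ℝ) (hK : IsOpen K) (η : ℝ → ℝ → ℝ)
    (f f' : ℝ → ℝ) (a b : ℝ)
    (hinvex : ∀ t ∈ Set.Icc (0 : ℝ) 1, a + t * η b a ∈ K)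
    (hf : ∀ x ∈ K, HasDerivAt f (f' x) x)
    (hη : 0 < η b a)
    (ha : 0 < |f' a|) (hb : 0 < |f' b|) (hne : |f' a| ≠ |f' b|)
    (hlog : ∀ t ∈ Set.Icc (0 : ℝ) 1,
      |f' (a + t * η b a)| ≤ |f' a| ^ (1 - t) * |f' b| ^ t) :
    |(1 / η b a) * (∫ x in a..(a + η b a), f x) - f ((2 * a + η b a) / 2)|
      ≤ η b a *
        ((|f' b| ^ ((1 : ℝ) / 2) - |f' a| ^ ((1 : ℝ) / 2)) /
          (Real.log |f' b| - Real.log |f' a|)) ^ 2 := by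
  set h := η b a with hh
  set A := |f' a| with hA
  set B := |f' b| with hB
  set la := Real.log A with hla
  set lb := Real.log B with hlb
  set L := lb - la with hLdef
  have hL : L ≠ 0 := by
    rw [hLdef, sub_ne_zero]
    intro hc
    exact hne (by rw [← Real.exp_log ha, ← Real.exp_log hb, ← hla, ← hlb, hc])
  set g : ℝ → ℝ := fun t => Real.exp (la + L * t) with hgdef
  have hgcont : Continuous g := by fun_prop
  have hgpos : ∀ t, 0 < g t := fun t => Real.exp_pos _
  set φ : ℝ → ℝ := fun t => f (a + t * h) with hφdef
  have hφd : ∀ t ∈ Set.Icc (0:ℝ) 1, HasDerivAt φ (f' (a + t * h) * h) t := by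
    intro t ht
    have h1 : HasDerivAt (fun t : ℝ => a + t * h) h t := by
      simpa using ((hasDerivAt_id t).mul_const h).const_add a
    exact (hf _ (hinvex t ht)).comp t h1
  have hderiv_eq : ∀ t ∈ Set.Icc (0:ℝ) 1, deriv φ t = f' (a + t * h) * h :=
    fun t ht => (hφd t ht).deriv
  have hg_eq : ∀ t : ℝ, A ^ (1 - t) * B ^ t = g t := by
    intro t
    rw [Real.rpow_def_of_pos ha, Real.rpow_def_of_pos hb, ← Real.exp_add]
    congr 1
    rw [hLdef]; ring
  have hbound : ∀ t ∈ Set.Icc (0:ℝ) 1, |deriv φ t| ≤ h * g t := by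
    intro t ht
    rw [hderiv_eq t ht, abs_mul, abs_of_pos hη, mul_comm (h)]
    exact mul_le_mul_of_nonneg_right (le_of_le_of_eq (hlog t ht) (hg_eq t)) hη.le
  have hsub : ∀ u v : ℝ, u ∈ Set.Icc (0:ℝ) 1 → v ∈ Set.Icc (0:ℝ) 1 →
      Set.uIoc u v ⊆ Set.Icc (0:ℝ) 1 := by
    intro u v hu hv
    exact (Set.uIoc_subset_uIcc).trans (Set.uIcc_subset_Icc hu hv)
  have hInt : ∀ u v : ℝ, u ∈ Set.Icc (0:ℝ) 1 → v ∈ Set.Icc (0:ℝ) 1 →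
      IntervalIntegrable (deriv φ) volume u v := by
    intro u v hu hv
    apply IntervalIntegrable.mono_fun' (g := fun t => h * g t)
      ((continuous_const.mul hgcont).intervalIntegrable u v)
      ((measurable_deriv φ).aestronglyMeasurable.restrict)
    exact ae_restrict_of_forall_mem measurableSet_uIoc
      (fun x hx => by simpa using hbound x (hsub u v hu hv hx))
  have h12 : (1/2 : ℝ) ∈ Set.Icc (0:ℝ) 1 := by norm_num
  have hφeq : ∀ t ∈ Set.Icc (0:ℝ) 1,
      φ t - φ (1/2) = ∫ s in (1/2 : ℝ)..t, deriv φ s := by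
    intro t ht
    rw [intervalIntegral.integral_eq_sub_of_hasDerivAt
        (f := φ) (fun x hx => by
          have hx' : x ∈ Set.Icc (0:ℝ) 1 := Set.uIcc_subset_Icc h12 ht hx
          exact (hderiv_eq x hx') ▸ hφd x hx')
        (hInt _ _ h12 ht)]
  have hgint : ∀ u v : ℝ, ∫ s in u..v, g s = (g v - g u) / L := by
    intro u v; exact int_exp_aux la L u v hL
  set P : ℝ → ℝ := fun t => (g t - g (1/2)) / L with hPdef
  have hPcont : Continuous P := by fun_prop
  set Q : ℝ → ℝ := fun t => h * |P t| with hQdef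
  have hQcont : Continuous Q := by fun_prop
  have hPb : ∀ t ∈ Set.Icc (0:ℝ) 1, |φ t - φ (1/2)| ≤ Q t := by
    intro t ht
    rw [hφeq t ht]
    have h1 := intervalIntegral.norm_integral_le_abs_of_norm_le (μ := volume)
      (f := fun s => deriv φ s) (a := (1/2:ℝ)) (b := t) (g := fun s => h * g s)
      (ae_restrict_of_forall_mem measurableSet_uIoc
        (fun x hx => by simpa using hbound x (hsub _ _ h12 ht hx)))
      ((continuous_const.mul hgcont).intervalIntegrable _ _)
    have h2 : |∫ s in (1/2:ℝ)..t, h * g s| = Q t := by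
      rw [intervalIntegral.integral_const_mul, hgint, abs_mul, abs_of_pos hη]
    calc |∫ s in (1/2:ℝ)..t, deriv φ s|
        = ‖∫ s in (1/2:ℝ)..t, deriv φ s‖ := (Real.norm_eq_abs _).symm
      _ ≤ |∫ s in (1/2:ℝ)..t, h * g s| := h1
      _ = Q t := h2
  have hIcc : Set.uIcc (0:ℝ) 1 = Set.Icc (0:ℝ) 1 := Set.uIcc_of_le (by norm_num)
  have hφcont : ContinuousOn φ (Set.Icc (0:ℝ) 1) :=
    fun t ht => (hφd t ht).continuousAt.continuousWithinAt
  have hφint : IntervalIntegrable φ volume 0 1 :=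
    (hφcont.mono (by rw [hIcc])).intervalIntegrable
  have hmid : φ (1/2 : ℝ) = f ((2 * a + h) / 2) := by
    show f _ = f _
    congr 1
    ring
  have key : (1 / h) * (∫ x in a..(a + h), f x) - f ((2 * a + h) / 2)
      = ∫ t in (0:ℝ)..1, (φ t - φ (1/2)) := by
    have hcv : ∫ t in (0:ℝ)..1, φ t = h⁻¹ * ∫ x in a..(a + h), f x := by
      have h1 : ∀ t : ℝ, φ t = f (h * t + a) := by
        intro t
        show f _ = f _
        congr 1
        ring
      simp_rw [h1]
      rw [intervalIntegral.integral_comp_mul_add f hη.ne' a]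
      norm_num [smul_eq_mul, add_comm h a]
    rw [intervalIntegral.integral_sub hφint intervalIntegrable_const,
      intervalIntegral.integral_const, hcv, ← hmid]
    simp [one_div]
  rw [key]
  have step1 : |∫ t in (0:ℝ)..1, (φ t - φ (1/2))| ≤ ∫ t in (0:ℝ)..1, Q t := by
    have h1 := intervalIntegral.norm_integral_le_abs_of_norm_le (μ := volume)
      (f := fun t => φ t - φ (1/2)) (a := (0:ℝ)) (b := 1) (g := Q)
      (ae_restrict_of_forall_mem measurableSet_uIoc
        (fun x hx => by
          simpa using hPb x (hsub _ _ ⟨le_refl 0, by norm_num⟩ ⟨by norm_num, le_refl 1⟩ hx)))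
      (hQcont.intervalIntegrable _ _)
    have h2 : |∫ t in (0:ℝ)..1, Q t| = ∫ t in (0:ℝ)..1, Q t := by
      apply abs_of_nonneg
      apply intervalIntegral.integral_nonneg (by norm_num)
      intro t _
      positivity
    calc |∫ t in (0:ℝ)..1, (φ t - φ (1/2))|
        = ‖∫ t in (0:ℝ)..1, (φ t - φ (1/2))‖ := (Real.norm_eq_abs _).symm
      _ ≤ |∫ t in (0:ℝ)..1, Q t| := h1
      _ = ∫ t in (0:ℝ)..1, Q t := h2
  refine step1.trans ?_
  have hsign1 : ∀ t ∈ Set.Icc (1/2 : ℝ) 1, |P t| = P t := by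
    intro t ht
    apply abs_of_nonneg
    show (0:ℝ) ≤ (g t - g (1/2)) / L
    rcases hL.lt_or_gt with hneg | hpos
    · refine div_nonneg_iff.mpr (Or.inr ⟨?_, hneg.le⟩)
      rw [sub_nonpos]
      exact Real.exp_le_exp.2 (by nlinarith [ht.1])
    · refine div_nonneg_iff.mpr (Or.inl ⟨?_, hpos.le⟩)
      rw [sub_nonneg]
      exact Real.exp_le_exp.2 (by nlinarith [ht.1])
  have hsign0 : ∀ t ∈ Set.Icc (0 : ℝ) (1/2), |P t| = -P t := by
    intro t ht
    apply abs_of_nonpos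
    show (g t - g (1/2)) / L ≤ (0:ℝ)
    rcases hL.lt_or_gt with hneg | hpos
    · refine div_nonpos_iff.mpr (Or.inl ⟨?_, hneg.le⟩)
      rw [sub_nonneg]
      exact Real.exp_le_exp.2 (by nlinarith [ht.2])
    · refine div_nonpos_iff.mpr (Or.inr ⟨?_, hpos.le⟩)
      rw [sub_nonpos]
      exact Real.exp_le_exp.2 (by nlinarith [ht.2])
  have hsplit : ∫ t in (0:ℝ)..1, Q t
      = h * ((∫ t in (0:ℝ)..(1/2), -P t) + ∫ t in (1/2:ℝ)..1, P t) := by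
    rw [hQdef]
    rw [intervalIntegral.integral_const_mul]
    congr 1
    rw [← intervalIntegral.integral_add_adjacent_intervals
      (a := (0:ℝ)) (b := 1/2) (c := 1)
      ((hPcont.abs).intervalIntegrable _ _) ((hPcont.abs).intervalIntegrable _ _)]
    congr 1
    · apply intervalIntegral.integral_congr
      intro t ht
      exact hsign0 t (by rwa [Set.uIcc_of_le (by norm_num)] at ht)
    · apply intervalIntegral.integral_congr
      intro t ht
      exact hsign1 t (by rwa [Set.uIcc_of_le (by norm_num)] at ht)
  rw [hsplit]
  have hPint : ∀ u v : ℝ, ∫ t in u..v, P t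
      = ((g v - g u) / L - (v - u) * g (1/2)) / L := by
    intro u v
    rw [hPdef]
    simp_rw [sub_div]
    rw [intervalIntegral.integral_sub
      ((hgcont.div_const L).intervalIntegrable _ _) (intervalIntegrable_const),
      intervalIntegral.integral_div, hgint, intervalIntegral.integral_const]
    simp only [smul_eq_mul]
    field_simp
  have hPint' : ∫ t in (0:ℝ)..(1/2), -P t
      = -(((g (1/2) - g 0) / L - (1/2) * g (1/2)) / L) := by
    rw [intervalIntegral.integral_neg, hPint]
    norm_num
  rw [hPint', hPint]
  have e0 : g 0 = Real.exp (la/2) * Real.exp (la/2) := by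
    show Real.exp (la + L * 0) = _
    rw [← Real.exp_add]; congr 1; ring
  have e1 : g 1 = Real.exp (lb/2) * Real.exp (lb/2) := by
    show Real.exp (la + L * 1) = _
    rw [← Real.exp_add, hLdef]; congr 1; ring
  have eh : g (1/2 : ℝ) = Real.exp (la/2) * Real.exp (lb/2) := by
    show Real.exp (la + L * (1/2)) = _
    rw [← Real.exp_add, hLdef]; congr 1; ring
  rw [show B ^ ((1:ℝ)/2) = Real.exp (lb/2) by
      rw [Real.rpow_def_of_pos hb, ← hlb]; congr 1; ring,
    show A ^ ((1:ℝ)/2) = Real.exp (la/2) by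
      rw [Real.rpow_def_of_pos ha, ← hla]; congr 1; ring,
    e0, e1, eh]
  rw [div_pow]
  apply le_of_eq
  field_simp
  ring
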